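/- arXiv:1112.2235 — 5 statements merged into one kernel-verified Lean document; each statement's English description precedes it below -/
import Mathlib

section
/- Let K be a field, C a free abelian group of finite rank, R a C-graded associative unital K-algebra, and p : C × C → Kˣ a normalized 2-cocycle. Let I be a graded subspace of R, i.e. I = ⊕_{γ∈C} (I ∩ R_γ). Then I is a completely prime two-sided ideal of the twist R_p if and only if I is a completely prime two-sided ideal of R. (A completely prime ideal is a proper two-sided ideal I such that ab ∈ I implies a ∈ I or b ∈ I.) -/
lemma my_add_eq_of_le {M : Type*} [AddCommMonoid M] [LinearOrder M] [IsOrderedCancelAddMonoid M] {a b c e : M}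
    (h1 : a ≤ c) (h2 : b ≤ e) (h : a + b = c + e) : a = c ∧ b = e := by
  constructor
  · by_contra hne
    exact absurd h (ne_of_lt (add_lt_add_of_lt_of_le (lt_of_le_of_ne h1 hne) h2))
  · by_contra hne
    exact absurd h (ne_of_lt (add_lt_add_of_le_of_lt h1 (lt_of_le_of_ne h2 hne)))

lemma my_transfer
    {K : Type*} [Field K] {C : Type*} [AddCommGroup C] [DecidableEq C]
    [Module.Free ℤ C] [Module.Finite ℤ C]
    {R : Type*} [Ring R] [Algebra K R]
    (𝒜 : C → Submodule K R) [GradedAlgebra 𝒜]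
    (m₁ m₂ : R →ₗ[K] R →ₗ[K] R)
    (hgr : ∀ (α β : C) (a b : R), a ∈ 𝒜 α → b ∈ 𝒜 β → m₁ a b ∈ 𝒜 (α + β))
    (u : C → C → Kˣ)
    (hm : ∀ (α β : C) (a b : R), a ∈ 𝒜 α → b ∈ 𝒜 β → m₂ a b = (u α β : K) • m₁ a b)
    (I : Submodule K R)
    (hIgr : ∀ x ∈ I, ∀ γ : C, ((DirectSum.decompose 𝒜 x γ : 𝒜 γ) : R) ∈ I)
    (h1 : ∀ a ∈ I, ∀ r : R, m₁ r a ∈ I ∧ m₁ a r ∈ I)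
    (h2 : ∀ a b : R, m₁ a b ∈ I → a ∈ I ∨ b ∈ I) :
    (∀ a ∈ I, ∀ r : R, m₂ r a ∈ I ∧ m₂ a r ∈ I) ∧
      (∀ a b : R, m₂ a b ∈ I → a ∈ I ∨ b ∈ I) := by
  classical
  -- membership of twisted products of homogeneous components
  have hmem2 : ∀ (α β : C) (a b : R), a ∈ 𝒜 α → b ∈ 𝒜 β → m₂ a b ∈ 𝒜 (α + β) := by
    intro α β a b ha hb
    rw [hm α β a b ha hb]
    exact Submodule.smul_mem _ _ (hgr α β a b ha hb)
  -- twisted products with one factor in I are in I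
  have hI2 : ∀ (α β : C) (a b : R), a ∈ 𝒜 α → b ∈ 𝒜 β → (a ∈ I ∨ b ∈ I) → m₂ a b ∈ I := by
    intro α β a b ha hb hab
    rw [hm α β a b ha hb]
    refine Submodule.smul_mem _ _ ?_
    rcases hab with h | h
    · exact (h1 a h b).2
    · exact (h1 b h a).1
  -- expansion of m₂ into homogeneous components
  have hexp : ∀ y z : R, m₂ y z =
      ∑ q ∈ (DirectSum.decompose 𝒜 y).support ×ˢ (DirectSum.decompose 𝒜 z).support,
        m₂ ((DirectSum.decompose 𝒜 y q.1 : 𝒜 q.1) : R) ((DirectSum.decompose 𝒜 z q.2 : 𝒜 q.2) : R) := by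
    intro y z
    rw [Finset.sum_product]
    conv_lhs => rw [← DirectSum.sum_support_decompose 𝒜 y, ← DirectSum.sum_support_decompose 𝒜 z]
    simp only [map_sum, LinearMap.sum_apply]
    exact Finset.sum_comm
  constructor
  · intro a ha r
    constructor
    · rw [hexp r a]
      exact Submodule.sum_mem _ fun q _ =>
        hI2 q.1 q.2 _ _ (SetLike.coe_mem _) (SetLike.coe_mem _) (Or.inr (hIgr a ha q.2))
    · rw [hexp a r]
      exact Submodule.sum_mem _ fun q _ =>
        hI2 q.1 q.2 _ _ (SetLike.coe_mem _) (SetLike.coe_mem _) (Or.inl (hIgr a ha q.1))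
  · intro a b hab
    by_contra hcon
    push_neg at hcon
    obtain ⟨ha, hb⟩ := hcon
    -- the lexicographic order on C via a ℤ-basis
    set ι := Module.Free.ChooseBasisIndex ℤ C with hι
    letI : LinearOrder ι := LinearOrder.lift' (Fintype.equivFin ι) (Fintype.equivFin ι).injective
    set bb := Module.Free.chooseBasis ℤ C with hbb
    set d : C → Lex (ι →₀ ℤ) := fun γ => toLex (bb.repr γ) with hd
    have dinj : Function.Injective d := fun x y h => bb.repr.injective (toLex.injective h)
    have dadd : ∀ x y : C, d (x + y) = d x + d y := by
      intro x y
      simp only [hd, map_add, toLex_add]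
    -- the sets of degrees of components not in I
    set Sa := (DirectSum.decompose 𝒜 a).support.filter
      (fun γ => ((DirectSum.decompose 𝒜 a γ : 𝒜 γ) : R) ∉ I) with hSa
    set Sb := (DirectSum.decompose 𝒜 b).support.filter
      (fun γ => ((DirectSum.decompose 𝒜 b γ : 𝒜 γ) : R) ∉ I) with hSb
    have hSane : Sa.Nonempty := by
      rw [hSa, Finset.filter_nonempty_iff]
      by_contra h
      push_neg at h
      exact ha (by
        rw [← DirectSum.sum_support_decompose 𝒜 a]
        exact Submodule.sum_mem _ fun γ hγ => h γ hγ)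
    have hSbne : Sb.Nonempty := by
      rw [hSb, Finset.filter_nonempty_iff]
      by_contra h
      push_neg at h
      exact hb (by
        rw [← DirectSum.sum_support_decompose 𝒜 b]
        exact Submodule.sum_mem _ fun γ hγ => h γ hγ)
    obtain ⟨α₀, hα₀S, hα₀max⟩ := Sa.exists_max_image d hSane
    obtain ⟨β₀, hβ₀S, hβ₀max⟩ := Sb.exists_max_image d hSbne
    have hα₀I : ((DirectSum.decompose 𝒜 a α₀ : 𝒜 α₀) : R) ∉ I := (Finset.mem_filter.mp hα₀S).2
    have hβ₀I : ((DirectSum.decompose 𝒜 b β₀ : 𝒜 β₀) : R) ∉ I := (Finset.mem_filter.mp hβ₀S).2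
    have hα₀supp : α₀ ∈ (DirectSum.decompose 𝒜 a).support := (Finset.mem_filter.mp hα₀S).1
    have hβ₀supp : β₀ ∈ (DirectSum.decompose 𝒜 b).support := (Finset.mem_filter.mp hβ₀S).1
    set δ := α₀ + β₀ with hδ
    -- the δ-component of m₂ a b lies in I
    have hkey : ((DirectSum.decompose 𝒜 (m₂ a b) δ : 𝒜 δ) : R) ∈ I := hIgr _ hab δ
    -- compute that component
    set P := (DirectSum.decompose 𝒜 a).support ×ˢ (DirectSum.decompose 𝒜 b).support with hP
    set f : C × C → R := fun q =>
      m₂ ((DirectSum.decompose 𝒜 a q.1 : 𝒜 q.1) : R) ((DirectSum.decompose 𝒜 b q.2 : 𝒜 q.2) : R)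
      with hf
    set g : C × C → R := fun q => ((DirectSum.decompose 𝒜 (f q) δ : 𝒜 δ) : R) with hg
    have hgval : ∀ q : C × C, g q = if q.1 + q.2 = δ then f q else 0 := by
      intro q
      by_cases h : q.1 + q.2 = δ
      · rw [if_pos h, hg]
        exact DirectSum.decompose_of_mem_same 𝒜
          (h ▸ hmem2 q.1 q.2 _ _ (SetLike.coe_mem _) (SetLike.coe_mem _))
      · rw [if_neg h, hg]
        exact DirectSum.decompose_of_mem_ne 𝒜
          (hmem2 q.1 q.2 _ _ (SetLike.coe_mem _) (SetLike.coe_mem _)) h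
    have hsum : ((DirectSum.decompose 𝒜 (m₂ a b) δ : 𝒜 δ) : R) = ∑ q ∈ P, g q := by
      rw [hexp a b, ← hP]
      rw [DirectSum.decompose_sum, DFinsupp.finset_sum_apply, AddSubmonoidClass.coe_finset_sum]
    -- every term with q ≠ (α₀, β₀) is in I
    have hrest : ∀ q ∈ P.erase (α₀, β₀), g q ∈ I := by
      intro q hq
      obtain ⟨hqne, hqP⟩ := Finset.mem_erase.mp hq
      rw [hgval q]
      by_cases h : q.1 + q.2 = δ
      · rw [if_pos h]
        refine hI2 q.1 q.2 _ _ (SetLike.coe_mem _) (SetLike.coe_mem _) ?_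
        by_contra hmem
        push_neg at hmem
        obtain ⟨hq1, hq2⟩ := hmem
        have hq1S : q.1 ∈ Sa := Finset.mem_filter.mpr ⟨(Finset.mem_product.mp hqP).1, hq1⟩
        have hq2S : q.2 ∈ Sb := Finset.mem_filter.mpr ⟨(Finset.mem_product.mp hqP).2, hq2⟩
        have hle1 : d q.1 ≤ d α₀ := hα₀max _ hq1S
        have hle2 : d q.2 ≤ d β₀ := hβ₀max _ hq2S
        have hdeq : d q.1 + d q.2 = d α₀ + d β₀ := by
          rw [← dadd, ← dadd, h, hδ]
        obtain ⟨he1, he2⟩ := my_add_eq_of_le hle1 hle2 hdeq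
        exact hqne (Prod.ext (dinj he1) (dinj he2))
      · rw [if_neg h]
        exact Submodule.zero_mem _
    -- hence the (α₀, β₀) term is in I
    have hq0P : (α₀, β₀) ∈ P := Finset.mem_product.mpr ⟨hα₀supp, hβ₀supp⟩
    have hg0 : g (α₀, β₀) ∈ I := by
      have := Finset.add_sum_erase P g hq0P
      have hsum' : ∑ q ∈ P, g q ∈ I := hsum ▸ hkey
      have herase : ∑ q ∈ P.erase (α₀, β₀), g q ∈ I := Submodule.sum_mem _ hrest
      have : g (α₀, β₀) = (∑ q ∈ P, g q) - ∑ q ∈ P.erase (α₀, β₀), g q := by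
        rw [← this, add_sub_cancel_right]
      rw [this]
      exact Submodule.sub_mem _ hsum' herase
    -- unwind: m₁ of the leading components is in I
    have hf0 : f (α₀, β₀) ∈ I := by
      have := hgval (α₀, β₀)
      rw [if_pos rfl] at this
      rwa [← this]
    have hm1 : m₁ ((DirectSum.decompose 𝒜 a α₀ : 𝒜 α₀) : R)
        ((DirectSum.decompose 𝒜 b β₀ : 𝒜 β₀) : R) ∈ I := by
      have hf0' : (↑(u α₀ β₀) : K) • m₁ ((DirectSum.decompose 𝒜 a α₀ : 𝒜 α₀) : R)
          ((DirectSum.decompose 𝒜 b β₀ : 𝒜 β₀) : R) ∈ I := by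
        rw [← hm α₀ β₀ _ _ (SetLike.coe_mem (DirectSum.decompose 𝒜 a α₀))
          (SetLike.coe_mem (DirectSum.decompose 𝒜 b β₀))]
        exact hf0
      have := Submodule.smul_mem I (((u α₀ β₀)⁻¹ : Kˣ) : K) hf0'
      rwa [smul_smul, Units.inv_mul, one_smul] at this
    rcases h2 _ _ hm1 with h | h
    · exact hα₀I h
    · exact hβ₀I h

/-- For a `K`-algebra `R` graded by a free abelian group `C` of finite rank and a
normalized 2-cocycle `p`, a graded subspace `I` of `R` is a completely prime
two-sided ideal of the twist `R_p` if and only if it is a completely prime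
two-sided ideal of `R`. -/
theorem graded_completely_prime_iff_twist
    {K : Type*} [Field K] {C : Type*} [AddCommGroup C] [DecidableEq C]
    [Module.Free ℤ C] [Module.Finite ℤ C]
    {R : Type*} [Ring R] [Algebra K R]
    (𝒜 : C → Submodule K R) [GradedAlgebra 𝒜]
    (p : C → C → Kˣ)
    (hp : ∀ α β γ : C, p β γ * p α (β + γ) = p (α + β) γ * p α β)
    (hpn : p 0 0 = 1)
    -- the twisted multiplication of `R_p`
    (mp : R →ₗ[K] R →ₗ[K] R)
    (hmp : ∀ (α β : C) (a b : R), a ∈ 𝒜 α → b ∈ 𝒜 β →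
      mp a b = (p α β : K) • (a * b))
    -- a graded subspace `I`, i.e. `I = ⊕_{γ∈C} (I ∩ R_γ)`
    (I : Submodule K R)
    (hIgr : ∀ x ∈ I, ∀ γ : C, ((DirectSum.decompose 𝒜 x γ : 𝒜 γ) : R) ∈ I) :
    ((1 : R) ∉ I ∧ (∀ a ∈ I, ∀ r : R, mp r a ∈ I ∧ mp a r ∈ I) ∧
      (∀ a b : R, mp a b ∈ I → a ∈ I ∨ b ∈ I))
    ↔
    ((1 : R) ∉ I ∧ (∀ a ∈ I, ∀ r : R, r * a ∈ I ∧ a * r ∈ I) ∧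
      (∀ a b : R, a * b ∈ I → a ∈ I ∨ b ∈ I)) := by
  constructor
  · rintro ⟨h0, h1, h2⟩
    refine ⟨h0, ?_⟩
    have := my_transfer 𝒜 mp (LinearMap.mul K R)
      (fun α β a b ha hb => by
        rw [hmp α β a b ha hb]
        exact Submodule.smul_mem _ _ (SetLike.mul_mem_graded ha hb))
      (fun α β => (p α β)⁻¹)
      (fun α β a b ha hb => by
        rw [LinearMap.mul_apply', hmp α β a b ha hb, smul_smul]
        simp)
      I hIgr h1 h2
    simpa only [LinearMap.mul_apply'] using this
  · rintro ⟨h0, h1, h2⟩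
    refine ⟨h0, ?_⟩
    have := my_transfer 𝒜 (LinearMap.mul K R) mp
      (fun α β a b ha hb => SetLike.mul_mem_graded ha hb)
      p
      (fun α β a b ha hb => by rw [LinearMap.mul_apply']; exact hmp α β a b ha hb)
      I hIgr
      (fun a ha r => by simpa only [LinearMap.mul_apply'] using h1 a ha r)
      (fun a b hab => h2 a b (by simpa only [LinearMap.mul_apply'] using hab))
    exact this
end

section
/- Let M be a free abelian group, let α_1,…,α_r ∈ M, and let f_1,…,f_r : M → ℤ be additive maps with f_i(α_i) = 2 for each i. Let s_i : M → M be the reflection s_i(v) = v − f_i(v)·α_i, an involutive group automorphism of M. Fix l ≥ 0, a word i_1,…,i_l with each i_j ∈ {1,…,r}, and a subset D ⊆ {1,…,l}. For 0 ≤ j ≤ l set w_{(j)} = s_{i_1}∘⋯∘s_{i_j} and w^D_{(j)} = s^D_{i_1}∘⋯∘s^D_{i_j}, where s^D_{i_k} = s_{i_k} if k ∈ D and s^D_{i_k} = id otherwise (and w_{(0)} = w^D_{(0)} = id). Then the subgroups of M generated by {w^D_{(j−1)}(α_{i_j}) : j ∈ {1,…,l} \ D} and by {w_{(j−1)}(α_{i_j})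 : j ∈ {1,…,l} \ D} coincide. -/
/-- The reflection `v ↦ v - f(v) • a` of a free abelian group associated to an
element `a` and an additive functional `f` with `f a = 2`. -/
def sRefl {M : Type*} [AddCommGroup M] (f : M →+ ℤ) (a : M) (v : M) : M :=
  v - f v • a

lemma sRefl_add {M : Type*} [AddCommGroup M] (f : M →+ ℤ) (a x y : M) :
    sRefl f a (x + y) = sRefl f a x + sRefl f a y := by
  simp only [sRefl, map_add, add_smul]
  abel

/-- For a word `s_{i_1} ⋯ s_{i_l}` in the reflections and a subset
`D ⊆ {1,…,l}`, the subgroup generated by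
`{w^D_{(j-1)}(α_{i_j}) : j ∉ D}` equals the subgroup generated by
`{w_{(j-1)}(α_{i_j}) : j ∉ D}`, where `w_{(j)} = s_{i_1} ∘ ⋯ ∘ s_{i_j}`
and `w^D_{(j)}` is the corresponding subword composition. -/
theorem cauchon_lattice_eq_inversion_lattice
    {M : Type*} [AddCommGroup M] [Module.Free ℤ M]
    (r l : ℕ) (α : Fin r → M) (f : Fin r → (M →+ ℤ))
    (hf : ∀ i : Fin r, f i (α i) = 2)
    (idx : Fin l → Fin r) (D : Finset (Fin l))
    (w wD : ℕ → M → M)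
    (hw0 : w 0 = id) (hwD0 : wD 0 = id)
    (hw : ∀ j : Fin l,
      w ((j : ℕ) + 1) = w (j : ℕ) ∘ sRefl (f (idx j)) (α (idx j)))
    (hwD : ∀ j : Fin l,
      wD ((j : ℕ) + 1) =
        wD (j : ℕ) ∘ (if j ∈ D then sRefl (f (idx j)) (α (idx j)) else id)) :
    AddSubgroup.closure {v : M | ∃ j : Fin l, j ∉ D ∧ v = wD (j : ℕ) (α (idx j))}
      = AddSubgroup.closure
          {v : M | ∃ j : Fin l, j ∉ D ∧ v = w (j : ℕ) (α (idx j))} := by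
  -- sets of generators truncated at level n
  set S : ℕ → Set M := fun n =>
    {v : M | ∃ j : Fin l, (j : ℕ) < n ∧ j ∉ D ∧ v = wD (j : ℕ) (α (idx j))} with hS
  set T : ℕ → Set M := fun n =>
    {v : M | ∃ j : Fin l, (j : ℕ) < n ∧ j ∉ D ∧ v = w (j : ℕ) (α (idx j))} with hT
  have hSmono : ∀ n, S n ⊆ S (n + 1) := by
    rintro n v ⟨j, hj, hjD, rfl⟩
    exact ⟨j, Nat.lt_succ_of_lt hj, hjD, rfl⟩
  have hTmono : ∀ n, T n ⊆ T (n + 1) := by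
    rintro n v ⟨j, hj, hjD, rfl⟩
    exact ⟨j, Nat.lt_succ_of_lt hj, hjD, rfl⟩
  -- additivity of the partial words
  have hadd : ∀ n, n ≤ l →
      (∀ x y, w n (x + y) = w n x + w n y) ∧
      (∀ x y, wD n (x + y) = wD n x + wD n y) := by
    intro n
    induction n with
    | zero => intro _; simp [hw0, hwD0]
    | succ n ih =>
      intro hn
      have hn' : n < l := hn
      obtain ⟨ihw, ihwD⟩ := ih (le_of_lt hn')
      set j : Fin l := ⟨n, hn'⟩ with hj
      have hjc : (j : ℕ) = n := rfl
      constructor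
      · intro x y
        rw [show n + 1 = (j : ℕ) + 1 from rfl, hw j, Function.comp_apply,
          Function.comp_apply, Function.comp_apply, sRefl_add, ihw]
      · intro x y
        by_cases hD : j ∈ D
        · rw [show n + 1 = (j : ℕ) + 1 from rfl, hwD j, if_pos hD,
            Function.comp_apply, Function.comp_apply, Function.comp_apply,
            sRefl_add, ihwD]
        · rw [show n + 1 = (j : ℕ) + 1 from rfl, hwD j, if_neg hD]
          exact ihwD x y
  -- main induction
  have key : ∀ n, n ≤ l →
      (∀ v, w n v - wD n v ∈ AddSubgroup.closure (S n)) ∧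
      AddSubgroup.closure (S n) = AddSubgroup.closure (T n) := by
    intro n
    induction n with
    | zero =>
      intro _
      constructor
      · intro v
        simp only [hw0, hwD0, id_eq, sub_self]
        exact zero_mem _
      · have h1 : S 0 = T 0 := by
          ext v
          simp [hS, hT]
        rw [h1]
    | succ n ih =>
      intro hn
      have hn' : n < l := hn
      obtain ⟨ih1, ih2⟩ := ih (le_of_lt hn')
      set j : Fin l := ⟨n, hn'⟩ with hj
      have hjuniq : ∀ j' : Fin l, (j' : ℕ) = n → j' = j := by
        intro j' h; exact Fin.ext h
      by_cases hD : j ∈ D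
      · -- no new generator
        have hSeq : S (n + 1) = S n := by
          ext v
          constructor
          · rintro ⟨j', hj', hj'D, rfl⟩
            rcases Nat.lt_succ_iff_lt_or_eq.mp hj' with h | h
            · exact ⟨j', h, hj'D, rfl⟩
            · exact absurd (hjuniq j' h ▸ hD) hj'D
          · exact fun hv => hSmono n hv
        have hTeq : T (n + 1) = T n := by
          ext v
          constructor
          · rintro ⟨j', hj', hj'D, rfl⟩
            rcases Nat.lt_succ_iff_lt_or_eq.mp hj' with h | h
            · exact ⟨j', h, hj'D, rfl⟩
            · exact absurd (hjuniq j' h ▸ hD) hj'D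
          · exact fun hv => hTmono n hv
        refine ⟨?_, by rw [hSeq, hTeq]; exact ih2⟩
        intro v
        rw [show n + 1 = (j : ℕ) + 1 from rfl, hw j, hwD j, if_pos hD,
          Function.comp_apply, Function.comp_apply, hSeq]
        exact ih1 _
      · -- new generator at index j
        set a : M := α (idx j) with ha
        -- the new wD-generator is in S (n+1)
        have hwDa : wD n a ∈ S (n + 1) := ⟨j, Nat.lt_succ_self n, hD, rfl⟩
        -- diff of the words on a
        have hdiff : w n a - wD n a ∈ AddSubgroup.closure (S (n + 1)) :=
          AddSubgroup.closure_mono (hSmono n) (ih1 a)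
        have hwa : w n a ∈ AddSubgroup.closure (S (n + 1)) := by
          have : w n a = (w n a - wD n a) + wD n a := by abel
          rw [this]
          exact add_mem hdiff (AddSubgroup.subset_closure hwDa)
        -- package additivity
        obtain ⟨hWadd, _⟩ := hadd n (le_of_lt hn')
        set W : M →+ M := AddMonoidHom.mk' (w n) hWadd with hW
        have hWapp : ∀ x, w n x = W x := fun _ => rfl
        have hcomp : ∀ v, w (n + 1) v = w n v - f (idx j) v • w n a := by
          intro v
          rw [show n + 1 = (j : ℕ) + 1 from rfl, hw j, Function.comp_apply]
          show W (sRefl (f (idx j)) a v) = W v - f (idx j) v • W a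
          rw [sRefl, map_sub, map_zsmul]
        have hcompD : ∀ v, wD (n + 1) v = wD n v := by
          intro v
          rw [show n + 1 = (j : ℕ) + 1 from rfl, hwD j, if_neg hD,
            Function.comp_apply, id_eq]
        constructor
        · intro v
          rw [hcomp v, hcompD v]
          have heq : w n v - f (idx j) v • w n a - wD n v
              = (w n v - wD n v) - f (idx j) v • w n a := by abel
          rw [heq]
          exact sub_mem (AddSubgroup.closure_mono (hSmono n) (ih1 v))
            (zsmul_mem hwa _)
        · -- closure (S (n+1)) = closure (T (n+1))
          apply le_antisymm
          · rw [AddSubgroup.closure_le]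
            rintro v ⟨j', hj', hj'D, rfl⟩
            rcases Nat.lt_succ_iff_lt_or_eq.mp hj' with h | h
            · have : wD (j' : ℕ) (α (idx j')) ∈ AddSubgroup.closure (S n) :=
                AddSubgroup.subset_closure ⟨j', h, hj'D, rfl⟩
              rw [ih2] at this
              exact AddSubgroup.closure_mono (hTmono n) this
            · have hj'j : j' = j := hjuniq j' h
              subst hj'j
              have hwaT : w n a ∈ AddSubgroup.closure (T (n + 1)) :=
                AddSubgroup.subset_closure ⟨j, Nat.lt_succ_self n, hD, rfl⟩
              have hdT : w n a - wD n a ∈ AddSubgroup.closure (T (n + 1)) := by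
                have := ih1 a
                rw [ih2] at this
                exact AddSubgroup.closure_mono (hTmono n) this
              have : (wD (j : ℕ) (α (idx j)) : M) = w n a - (w n a - wD n a) := by
                show wD n a = _
                abel
              rw [this]
              exact sub_mem hwaT hdT
          · rw [AddSubgroup.closure_le]
            rintro v ⟨j', hj', hj'D, rfl⟩
            rcases Nat.lt_succ_iff_lt_or_eq.mp hj' with h | h
            · have : w (j' : ℕ) (α (idx j')) ∈ AddSubgroup.closure (T n) :=
                AddSubgroup.subset_closure ⟨j', h, hj'D, rfl⟩
              rw [← ih2] at this
              exact AddSubgroup.closure_mono (hSmono n) this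
            · have hj'j : j' = j := hjuniq j' h
              subst hj'j
              exact hwa
  -- conclude
  have hSl : {v : M | ∃ j : Fin l, j ∉ D ∧ v = wD (j : ℕ) (α (idx j))} = S l := by
    ext v
    simp only [hS, Set.mem_setOf_eq]
    exact ⟨fun ⟨j, h1, h2⟩ => ⟨j, j.isLt, h1, h2⟩, fun ⟨j, _, h1, h2⟩ => ⟨j, h1, h2⟩⟩
  have hTl : {v : M | ∃ j : Fin l, j ∉ D ∧ v = w (j : ℕ) (α (idx j))} = T l := by
    ext v
    simp only [hT, Set.mem_setOf_eq]
    exact ⟨fun ⟨j, h1, h2⟩ => ⟨j, j.isLt, h1, h2⟩, fun ⟨j, _, h1, h2⟩ => ⟨j, h1, h2⟩⟩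
  rw [hSl, hTl]
  exact (key l le_rfl).2
end

section
/- Let K be a field, A an associative unital K-algebra, σ a K-algebra automorphism of A, and ∂ : A → A a K-linear right skew σ-derivation, i.e. ∂(ab) = ∂(a)σ(b) + a∂(b) for all a, b ∈ A. Assume ∂ is locally nilpotent and that σ∂σ⁻¹ = q'·∂ for some q' ∈ Kˣ which is not a root of unity. Then ∂ is right regular: for all σ-eigenvectors a, b ∈ A of ∂-degrees m and n respectively, and every integer k with n ≤ k ≤ m + n, there exist scalars s_0, s_1, …, s_{m+n−k} ∈ K with s_0 ≠ 0 such that ∂^k(ab) = Σ_{i=0}^{m+n−k} s_i·(∂^{k−n+i}(a))·(∂^{n−i}(b)). -/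
/-- Gaussian binomial coefficient via the Pascal rule `g(k+1,j+1)=q^(k-j) g(k,j)+g(k,j+1)`. -/
def gqAux {K : Type*} [Field K] (q : K) : ℕ → ℕ → K
  | 0, 0 => 1
  | 0, _+1 => 0
  | k+1, 0 => gqAux q k 0
  | k+1, j+1 => q ^ (k - j) * gqAux q k j + gqAux q k (j+1)

theorem gqAux_zero {K : Type*} [Field K] (q : K) : ∀ k, gqAux q k 0 = 1
  | 0 => rfl
  | k+1 => gqAux_zero q k

theorem gqAux_gt {K : Type*} [Field K] (q : K) : ∀ k j, k < j → gqAux q k j = 0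
  | 0, j+1, _ => rfl
  | k+1, j+1, h => by
      have h1 : k < j := by omega
      have h2 : k < j+1 := by omega
      simp [gqAux, gqAux_gt q k j h1, gqAux_gt q k (j+1) h2]

/-- The "q-factorial"-type product `∏ (q^(i+1) - 1)`. -/
def dqAux {K : Type*} [Field K] (q : K) (k : ℕ) : K :=
  ∏ i ∈ Finset.range k, (q ^ (i+1) - 1)

theorem dqAux_succ {K : Type*} [Field K] (q : K) (k : ℕ) :
    dqAux q (k+1) = dqAux q k * (q ^ (k+1) - 1) :=
  Finset.prod_range_succ _ _

theorem gqAux_mul {K : Type*} [Field K] (q : K) :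
    ∀ k j, j ≤ k → gqAux q k j * (dqAux q j * dqAux q (k-j)) = dqAux q k := by
  intro k
  induction k with
  | zero =>
    intro j hj
    interval_cases j
    simp [gqAux, dqAux]
  | succ N ih =>
    intro j hj
    match j with
    | 0 => simp [gqAux_zero, dqAux]
    | j+1 =>
      rcases eq_or_lt_of_le hj with h | h
      · -- j+1 = N+1, i.e. j = N
        have hjN : j = N := by omega
        subst hjN
        have h0 : gqAux q (j+1) (j+1) = gqAux q j j := by
          simp [gqAux, gqAux_gt q j (j+1) (by omega)]
        have hIH := ih j le_rfl
        have hd0 : dqAux q 0 = 1 := by simp [dqAux]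
        rw [Nat.sub_self, hd0, mul_one] at hIH
        rw [Nat.sub_self, hd0, mul_one, h0, dqAux_succ]
        calc gqAux q j j * (dqAux q j * (q ^ (j+1) - 1))
            = (gqAux q j j * dqAux q j) * (q ^ (j+1) - 1) := by ring
          _ = dqAux q j * (q ^ (j+1) - 1) := by rw [hIH]
      · -- j+1 ≤ N
        have hjN : j + 1 ≤ N := by omega
        obtain ⟨mm, rfl⟩ : ∃ mm, N = j + 1 + mm := ⟨N - (j+1), by omega⟩
        have e1 : j + 1 + mm - j = mm + 1 := by omega
        have e2 : j + 1 + mm - (j + 1) = mm := by omega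
        have e3 : j + 1 + mm + 1 - (j + 1) = mm + 1 := by omega
        have hIH1 := ih j (by omega)
        have hIH2 := ih (j+1) (by omega)
        rw [e2] at hIH2
        rw [e1] at hIH1
        show (q ^ (j + 1 + mm - j) * gqAux q (j+1+mm) j + gqAux q (j+1+mm) (j+1)) *
            (dqAux q (j+1) * dqAux q (j + 1 + mm + 1 - (j+1))) = dqAux q (j+1+mm+1)
        rw [e1, e3]
        have ejj : j + 1 + mm = j + mm + 1 := by omega
        rw [ejj] at hIH1 hIH2 ⊢
        rw [dqAux_succ q (j+mm+1), dqAux_succ q (j+mm), dqAux_succ q mm, dqAux_succ q j]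
        rw [dqAux_succ q (j+mm), dqAux_succ q mm] at hIH1
        rw [dqAux_succ q (j+mm), dqAux_succ q j] at hIH2
        linear_combination (q ^ (mm+1) * (q ^ (j+1) - 1)) * hIH1 +
          (q ^ (mm+1) - 1) * hIH2

theorem dqAux_ne_zero {K : Type*} [Field K] {q : K} (h : ∀ i : ℕ, 1 ≤ i → q ^ i ≠ 1) (k : ℕ) :
    dqAux q k ≠ 0 := by
  apply Finset.prod_ne_zero_iff.mpr
  intro i _
  exact sub_ne_zero.mpr (h (i+1) (by omega))

theorem gqAux_ne_zero {K : Type*} [Field K] {q : K} (h : ∀ i : ℕ, 1 ≤ i → q ^ i ≠ 1) {k j : ℕ}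
    (hj : j ≤ k) : gqAux q k j ≠ 0 := by
  intro h0
  have h1 := gqAux_mul q k j hj
  rw [h0, zero_mul] at h1
  exact dqAux_ne_zero h k h1.symm



/-- A locally nilpotent right skew `σ`-derivation `δ` with `σ δ σ⁻¹ = q' δ`, where
`q' ∈ Kˣ` is not a root of unity, is right regular: for `σ`-eigenvectors `a, b`
of `δ`-degrees `m, n` and `n ≤ k ≤ m + n`, one has
`δ^k(ab) = Σ_{i=0}^{m+n-k} s_i (δ^{k-n+i} a)(δ^{n-i} b)` with `s_0 ≠ 0`. -/
theorem skew_derivation_right_regular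
    {K : Type*} [Field K] {A : Type*} [Ring A] [Algebra K A]
    (σ : A ≃ₐ[K] A) (δ : Module.End K A)
    (hskew : ∀ a b : A, δ (a * b) = δ a * σ b + a * δ b)
    (hln : ∀ a : A, ∃ n : ℕ, (δ ^ n) a = 0)
    (q' : Kˣ) (hq' : ∀ n : ℕ, q' ^ n = 1 → n = 0)
    (hconj : ∀ a : A, σ (δ (σ.symm a)) = (q' : K) • δ a) :
    ∀ (a b : A) (ta tb : K) (m n : ℕ),
      a ≠ 0 → σ a = ta • a → (δ ^ (m + 1)) a = 0 → (δ ^ m) a ≠ 0 →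
      b ≠ 0 → σ b = tb • b → (δ ^ (n + 1)) b = 0 → (δ ^ n) b ≠ 0 →
      ∀ k : ℕ, n ≤ k → k ≤ m + n →
        ∃ s : ℕ → K, s 0 ≠ 0 ∧
          (δ ^ k) (a * b) =
            ∑ i ∈ Finset.range (m + n - k + 1),
              s i • ((δ ^ (k - n + i)) a * (δ ^ (n - i)) b) := by
  intro a b ta tb m n ha0 haσ ham1 ham hb0 hbσ hbn1 hbn k hkn hkm
  set q : K := (q' : K) with hqdef
  -- q is not a nontrivial root of unity in K
  have hq1 : ∀ i : ℕ, 1 ≤ i → q ^ i ≠ 1 := by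
    intro i hi h
    have hu : q' ^ i = 1 := by
      ext
      push_cast
      exact h
    have := hq' i hu
    omega
  -- tb ≠ 0
  have htb : tb ≠ 0 := by
    intro h
    apply hb0
    apply σ.injective
    rw [hbσ, h, zero_smul, map_zero]
  -- the conjugation relation in convenient form
  have hσδ : ∀ x : A, σ (δ x) = q • δ (σ x) := by
    intro x
    have h := hconj (σ x)
    rwa [σ.symm_apply_apply] at h
  -- δ^i b is a σ-eigenvector with eigenvalue q^i * tb
  have hσb : ∀ i : ℕ, σ ((δ ^ i) b) = (q ^ i * tb) • (δ ^ i) b := by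
    intro i
    induction i with
    | zero => simpa using hbσ
    | succ i ih =>
      have h1 : (δ ^ (i+1)) b = δ ((δ ^ i) b) := by
        rw [pow_succ']; rfl
      rw [h1, hσδ, ih, map_smul, smul_smul]
      ring_nf
  -- vanishing of high powers
  have hbz : ∀ p : ℕ, n + 1 ≤ p → (δ ^ p) b = 0 := by
    intro p hp
    obtain ⟨c, rfl⟩ : ∃ c, p = c + (n + 1) := ⟨p - (n+1), by omega⟩
    rw [pow_add, Module.End.mul_apply, hbn1, map_zero]
  have haz : ∀ p : ℕ, m + 1 ≤ p → (δ ^ p) a = 0 := by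
    intro p hp
    obtain ⟨c, rfl⟩ : ∃ c, p = c + (m + 1) := ⟨p - (m+1), by omega⟩
    rw [pow_add, Module.End.mul_apply, ham1, map_zero]
  -- the q-Leibniz rule
  have key : ∀ N : ℕ, (δ ^ N) (a * b) =
      ∑ j ∈ Finset.range (N+1), (tb ^ j * gqAux q N j) • ((δ ^ j) a * (δ ^ (N - j)) b) := by
    intro N
    induction N with
    | zero => simp [gqAux]
    | succ N ih =>
      have h1 : (δ ^ (N+1)) (a * b) = δ ((δ ^ N) (a * b)) := by
        rw [pow_succ']; rfl
      rw [h1, ih, map_sum]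
      -- rewrite each summand
      have hterm : ∀ j ∈ Finset.range (N+1),
          δ ((tb ^ j * gqAux q N j) • ((δ ^ j) a * (δ ^ (N - j)) b))
            = (tb ^ (j+1) * (q ^ (N-j) * gqAux q N j)) • ((δ ^ (j+1)) a * (δ ^ (N-j)) b)
              + (tb ^ j * gqAux q N j) • ((δ ^ j) a * (δ ^ (N+1-j)) b) := by
        intro j hj
        have hjN : j ≤ N := by simpa [Nat.lt_succ_iff] using hj
        rw [map_smul, hskew, hσb]
        have hda : δ ((δ ^ j) a) = (δ ^ (j+1)) a := by rw [pow_succ']; rfl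
        have hdb : δ ((δ ^ (N-j)) b) = (δ ^ (N+1-j)) b := by
          rw [show N+1-j = (N-j)+1 by omega, pow_succ']; rfl
        rw [hda, hdb, mul_smul_comm, smul_add, smul_smul]
        congr 2
        ring
      rw [Finset.sum_congr rfl hterm, Finset.sum_add_distrib]
      -- now handle the RHS
      rw [Finset.sum_range_succ' (fun j => (tb ^ j * gqAux q (N+1) j) •
            ((δ ^ j) a * (δ ^ (N+1-j)) b)) (N+1)]
      have hsplit : ∀ j ∈ Finset.range (N+1),
          (tb ^ (j+1) * gqAux q (N+1) (j+1)) • ((δ ^ (j+1)) a * (δ ^ (N+1-(j+1))) b)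
            = (tb ^ (j+1) * (q ^ (N-j) * gqAux q N j)) • ((δ ^ (j+1)) a * (δ ^ (N-j)) b)
              + (tb ^ (j+1) * gqAux q N (j+1)) • ((δ ^ (j+1)) a * (δ ^ (N+1-(j+1))) b) := by
        intro j hj
        have e1 : N + 1 - (j+1) = N - j := by omega
        rw [e1, show gqAux q (N+1) (j+1) = q ^ (N-j) * gqAux q N j + gqAux q N (j+1) from rfl]
        rw [← add_smul]
        ring_nf
      rw [Finset.sum_congr rfl hsplit, Finset.sum_add_distrib, add_assoc]
      congr 1
      -- remaining: ∑ (tb^j gq N j) • (δ^j a * δ^{N+1-j} b)  =  shifted sum + j=0 term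
      have h0 : (tb ^ 0 * gqAux q (N+1) 0) • ((δ ^ 0) a * (δ ^ (N+1-0)) b)
          = (tb ^ 0 * gqAux q N 0) • ((δ ^ 0) a * (δ ^ (N+1-0)) b) := by
        rw [gqAux_zero, gqAux_zero]
      rw [h0]
      rw [← Finset.sum_range_succ' (fun j => (tb ^ j * gqAux q N j) •
            ((δ ^ j) a * (δ ^ (N+1-j)) b)) (N+1)]
      rw [Finset.sum_range_succ _ (N+1)]
      have hz : (tb ^ (N+1) * gqAux q N (N+1)) • ((δ ^ (N+1)) a * (δ ^ (N+1-(N+1))) b) = 0 := by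
        rw [gqAux_gt q N (N+1) (by omega)]
        simp
      rw [hz, add_zero]
  -- choose the coefficients
  refine ⟨fun i => if i ≤ n then tb ^ (k-n+i) * gqAux q k (k-n+i) else 0, ?_, ?_⟩
  · simp only [Nat.zero_le, if_pos, Nat.add_zero]
    exact mul_ne_zero (pow_ne_zero _ htb) (gqAux_ne_zero hq1 (by omega))
  · rw [key k]
    -- Step A: drop the vanishing low terms and reindex
    have hA : ∑ j ∈ Finset.range (k+1), (tb ^ j * gqAux q k j) • ((δ ^ j) a * (δ ^ (k-j)) b)
        = ∑ i ∈ Finset.range (n+1),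
            (if i ≤ n then tb ^ (k-n+i) * gqAux q k (k-n+i) else 0) •
              ((δ ^ (k-n+i)) a * (δ ^ (n-i)) b) := by
      rw [Finset.range_eq_Ico,
        ← Finset.sum_Ico_consecutive _ (Nat.zero_le (k-n)) (by omega : k-n ≤ k+1)]
      have hz : ∑ j ∈ Finset.Ico 0 (k-n),
          (tb ^ j * gqAux q k j) • ((δ ^ j) a * (δ ^ (k-j)) b) = 0 := by
        apply Finset.sum_eq_zero
        intro j hj
        rw [Finset.mem_Ico] at hj
        rw [hbz (k-j) (by omega), mul_zero, smul_zero]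
      rw [hz, zero_add, Finset.sum_Ico_eq_sum_range]
      rw [show k + 1 - (k-n) = n + 1 by omega]
      apply Finset.sum_congr rfl
      intro i hi
      rw [Finset.mem_range, Nat.lt_succ_iff] at hi
      rw [if_pos hi, show k - (k-n+i) = n - i by omega]
    rw [hA]
    -- Step B: adjust the summation range
    rcases le_total (n+1) (m+n-k+1) with h | h
    · apply Finset.sum_subset (Finset.range_subset_range.mpr h)
      intro i hi hni
      rw [Finset.mem_range, Nat.lt_succ_iff] at hni
      rw [if_neg hni, zero_smul]
    · refine (Finset.sum_subset (Finset.range_subset_range.mpr h) ?_).symm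
      intro i hi hni
      rw [Finset.mem_range, Nat.lt_succ_iff] at hi hni
      rw [haz (k-n+i) (by omega), zero_mul, smul_zero]
end

section
/- Let K be a field, A an associative unital K-algebra which is a domain, σ a K-algebra automorphism of A, and ∂ : A → A a locally nilpotent right skew σ-derivation which is right regular and satisfies σ∂σ⁻¹ = q'·∂ for some q' ∈ Kˣ. Let e ∈ A be a σ-eigenvector of ∂-degree m, and suppose that the multiplicative set {e^n : n ∈ ℕ} satisfies the left and right Ore conditions in A. Then the multiplicative set {(∂^m(e))^n : n ∈ ℕ} also satisfies the left and right Ore conditions in A. -/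
private def qb {K : Type*} [Field K] (q : K) : ℕ → ℕ → K
  | 0, 0 => 1
  | 0, _+1 => 0
  | N+1, 0 => qb q N 0
  | N+1, i+1 => qb q N i + q ^ (i+1) * qb q N (i+1)

private lemma qb_zero_of_lt {K : Type*} [Field K] (q : K) :
    ∀ N i : ℕ, N < i → qb q N i = 0 := by
  intro N
  induction N with
  | zero =>
      intro i hi
      obtain ⟨j, rfl⟩ : ∃ j, i = j + 1 := ⟨i - 1, by omega⟩
      rfl
  | succ N ih =>
      intro i hi
      obtain ⟨j, rfl⟩ : ∃ j, i = j + 1 := ⟨i - 1, by omega⟩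
      show qb q N j + q ^ (j+1) * qb q N (j+1) = 0
      rw [ih j (by omega), ih (j+1) (by omega)]
      ring

set_option linter.unusedSectionVars false
set_option maxHeartbeats 1000000

section Aux
variable {K : Type*} [Field K] {A : Type*} [Ring A] [Algebra K A] [IsDomain A]
variable (σ : A ≃ₐ[K] A) (δ : Module.End K A) (q' : Kˣ)


private lemma jos_dpow_shift {s t u : ℕ} (h : s + t = u) (x : A) :
    (δ ^ s) ((δ ^ t) x) = (δ ^ u) x := by subst h; rw [pow_add]; rfl

private lemma jos_zero_mono {s t : ℕ} {x : A} (h : (δ ^ s) x = 0) (hst : s ≤ t) :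
    (δ ^ t) x = 0 := by
  have : (δ ^ t) x = (δ ^ (t - s)) ((δ ^ s) x) := (jos_dpow_shift δ (by omega) x).symm
  rw [this, h, map_zero]

private lemma jos_smul_eqz {c : K} {x : A} (hc : c ≠ 0) (h : c • x = 0) : x = 0 := by
  rw [Algebra.smul_def] at h
  rcases mul_eq_zero.1 h with h' | h'
  · exact absurd ((map_eq_zero_iff (algebraMap K A) (RingHom.injective _)).1 h') hc
  · exact h'

private lemma jos_smul_ne {c : K} {x : A} (hc : c ≠ 0) (hx : x ≠ 0) : c • x ≠ 0 :=
  fun h => hx (jos_smul_eqz hc h)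

private lemma jos_smul_left_cancel {c d : K} {x : A} (hx : x ≠ 0) (h : c • x = d • x) :
    c = d := by
  by_contra hcd
  have : (c - d) • x = 0 := by rw [sub_smul, h, sub_self]
  exact hx (jos_smul_eqz (sub_ne_zero.2 hcd) this)

private lemma jos_eq_inv_smul {c : K} {x y : A} (hc : c ≠ 0) (h : c • x = y) :
    x = c⁻¹ • y := by
  rw [← h, smul_smul, inv_mul_cancel₀ hc, one_smul]

-- σ-iterate lemmas
private lemma jos_iter_mul (i : ℕ) (x y : A) :
    (⇑σ)^[i] (x * y) = (⇑σ)^[i] x * (⇑σ)^[i] y := by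
  induction i generalizing x y with
  | zero => rfl
  | succ i ih => simp [Function.iterate_succ_apply, map_mul, ih]

private lemma jos_iter_smul (i : ℕ) (c : K) (x : A) :
    (⇑σ)^[i] (c • x) = c • (⇑σ)^[i] x := by
  induction i generalizing x with
  | zero => rfl
  | succ i ih => simp [Function.iterate_succ_apply, map_smul, ih]

private lemma jos_iter_zero (i : ℕ) : (⇑σ)^[i] (0 : A) = 0 := by
  induction i with
  | zero => rfl
  | succ i ih => simp [Function.iterate_succ_apply, map_zero, ih]

private lemma jos_iter_ne_zero (i : ℕ) {x : A} (hx : x ≠ 0) : (⇑σ)^[i] x ≠ 0 := by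
  induction i generalizing x with
  | zero => exact hx
  | succ i ih =>
      rw [Function.iterate_succ_apply]
      exact ih (fun h => hx (σ.injective (h.trans (map_zero σ).symm)))

private lemma jos_iter_eigen {c : K} {x : A} (hx : σ x = c • x) (i : ℕ) :
    (⇑σ)^[i] x = c ^ i • x := by
  induction i with
  | zero => simp
  | succ i ih =>
      rw [Function.iterate_succ_apply', ih, map_smul, hx, smul_smul, pow_succ, mul_comm]

private lemma jos_ysym_mul (i : ℕ) (x y : A) :
    (⇑σ.symm)^[i] (x * y) = (⇑σ.symm)^[i] x * (⇑σ.symm)^[i] y := by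
  induction i generalizing x y with
  | zero => rfl
  | succ i ih => simp [Function.iterate_succ_apply, map_mul, ih]

private lemma jos_ysym_smul (i : ℕ) (c : K) (x : A) :
    (⇑σ.symm)^[i] (c • x) = c • (⇑σ.symm)^[i] x := by
  induction i generalizing x with
  | zero => rfl
  | succ i ih => simp [Function.iterate_succ_apply, map_smul, ih]

private lemma jos_ysym_iter (i : ℕ) (x : A) : (⇑σ.symm)^[i] ((⇑σ)^[i] x) = x :=
  (Function.LeftInverse.iterate σ.symm_apply_apply i) x

private lemma jos_iter_ysym (i : ℕ) (x : A) : (⇑σ)^[i] ((⇑σ.symm)^[i] x) = x :=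
  (Function.LeftInverse.iterate σ.apply_symm_apply i) x



variable (hskew : ∀ a b : A, δ (a * b) = δ a * σ b + a * δ b)
variable (hconj : ∀ a : A, σ (δ (σ.symm a)) = (q' : K) • δ a)

include hskew in
private lemma jos_delta_one : δ (1 : A) = 0 := by
  have h := hskew 1 1
  rw [mul_one, show σ (1:A) = 1 from map_one σ, mul_one, one_mul] at h
  exact add_eq_right.1 h.symm

include hconj in
private lemma jos_comm1 (x : A) : σ (δ x) = (q' : K) • δ (σ x) := by
  simpa using hconj (σ x)

include hconj in
private lemma jos_comm1' (x : A) : δ (σ x) = ((q' : K))⁻¹ • σ (δ x) := by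
  rw [jos_comm1 σ δ q' hconj x, smul_smul, inv_mul_cancel₀ (Units.ne_zero q'), one_smul]

include hconj in
private lemma jos_symm_delta (x : A) : δ (σ.symm x) = (q' : K) • σ.symm (δ x) := by
  have h := hconj x
  have := congrArg σ.symm h
  rw [σ.symm_apply_apply, map_smul] at this
  exact this

include hconj in
private lemma jos_iter_delta (i : ℕ) (x : A) :
    δ ((⇑σ)^[i] x) = ((q' : K))⁻¹ ^ i • (⇑σ)^[i] (δ x) := by
  induction i generalizing x with
  | zero => simp
  | succ i ih =>
      rw [Function.iterate_succ_apply', jos_comm1' σ δ q' hconj, ih, map_smul, smul_smul,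
        ← Function.iterate_succ_apply' (⇑σ) i (δ x), ← pow_succ']

include hconj in
private lemma jos_ysym_delta0 (i : ℕ) {x : A} (hx : δ x = 0) :
    δ ((⇑σ.symm)^[i] x) = 0 := by
  induction i generalizing x with
  | zero => exact hx
  | succ i ih =>
      rw [Function.iterate_succ_apply]
      exact ih (by rw [jos_symm_delta σ δ q' hconj, hx, map_zero, smul_zero])

include hconj in
private lemma jos_eig_deriv (j : ℕ) {x : A} {lam : K} (hx : σ x = lam • x) :
    σ ((δ ^ j) x) = ((q' : K) ^ j * lam) • (δ ^ j) x := by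
  induction j with
  | zero => simpa using hx
  | succ j ih =>
      have h1 : (δ ^ (j+1)) x = δ ((δ ^ j) x) := by rw [pow_succ']; rfl
      rw [h1, jos_comm1 σ δ q' hconj, ih, map_smul, smul_smul]
      ring_nf

include hskew in
private lemma jos_const_left {x : A} (hx : δ x = 0) :
    ∀ (N : ℕ) (y : A), (δ ^ N) (x * y) = x * (δ ^ N) y := by
  intro N
  induction N with
  | zero => intro y; rfl
  | succ N ih =>
      intro y
      have h1 : (δ ^ (N+1)) (x * y) = (δ ^ N) (δ (x * y)) := by rw [pow_succ]; rfl
      have h2 : (δ ^ N) (δ y) = (δ ^ (N+1)) y := by rw [pow_succ]; rfl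
      rw [h1, hskew, hx, zero_mul, zero_add, ih (δ y), h2]

include hskew hconj in
private lemma jos_const_right {y : A} (hy : δ y = 0) :
    ∀ (N : ℕ) (x : A), (δ ^ N) (x * y) = (δ ^ N) x * (⇑σ)^[N] y := by
  have key : ∀ (N : ℕ) (x y : A), δ y = 0 → (δ ^ N) (x * y) = (δ ^ N) x * (⇑σ)^[N] y := by
    intro N
    induction N with
    | zero => intro x y _; rfl
    | succ N ih =>
        intro x y hy
        have h1 : (δ ^ (N+1)) (x * y) = (δ ^ N) (δ (x * y)) := by rw [pow_succ]; rfl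
        have h2 : (δ ^ N) (δ x) = (δ ^ (N+1)) x := by rw [pow_succ]; rfl
        have hy' : δ (σ y) = 0 := by
          rw [jos_comm1' σ δ q' hconj, hy, map_zero, smul_zero]
        rw [h1, hskew, hy, mul_zero, add_zero, ih (δ x) (σ y) hy', h2,
          ← Function.iterate_succ_apply (⇑σ) N y]
  exact fun N x => key N x y hy



include hskew hconj in
private lemma jos_leibniz :
    ∀ (N : ℕ) (x y : A), (δ ^ N) (x * y) =
      ∑ i ∈ Finset.range (N + 1),
        qb ((q' : K)⁻¹) N i • ((δ ^ i) x * (⇑σ)^[i] ((δ ^ (N - i)) y)) := by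
  intro N
  induction N with
  | zero =>
      intro x y
      simp [qb]
  | succ N ih =>
      intro x y
      have hpow : (δ ^ (N+1)) (x * y) = δ ((δ ^ N) (x * y)) := by rw [pow_succ']; rfl
      rw [hpow, ih, map_sum]
      have hterm : ∀ i ∈ Finset.range (N+1),
          δ (qb ((q' : K)⁻¹) N i • ((δ ^ i) x * (⇑σ)^[i] ((δ ^ (N - i)) y)))
            = qb ((q' : K)⁻¹) N i • ((δ ^ (i+1)) x * (⇑σ)^[i+1] ((δ ^ (N + 1 - (i+1))) y))
              + (((q' : K)⁻¹) ^ i * qb ((q' : K)⁻¹) N i) •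
                  ((δ ^ i) x * (⇑σ)^[i] ((δ ^ (N + 1 - i)) y)) := by
        intro i hi
        have hiN : i ≤ N := by simpa [Nat.lt_succ_iff] using hi
        rw [map_smul, hskew]
        have e1 : δ ((δ ^ i) x) = (δ ^ (i+1)) x := by rw [pow_succ']; rfl
        have hidx : N + 1 - (i+1) = N - i := by omega
        have e2 : σ ((⇑σ)^[i] ((δ ^ (N - i)) y)) = (⇑σ)^[i+1] ((δ ^ (N + 1 - (i+1))) y) := by
          rw [hidx, ← Function.iterate_succ_apply' (⇑σ) i]
        have h4 : δ ((δ ^ (N - i)) y) = (δ ^ (N + 1 - i)) y := by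
          have h5 : (δ ^ (N - i + 1)) y = δ ((δ ^ (N - i)) y) := by rw [pow_succ']; rfl
          rw [← h5]
          congr 2
          omega
        have e3 : δ ((⇑σ)^[i] ((δ ^ (N - i)) y))
            = ((q' : K))⁻¹ ^ i • (⇑σ)^[i] ((δ ^ (N + 1 - i)) y) := by
          rw [jos_iter_delta σ δ q' hconj, h4]
        rw [e1, e2, e3, smul_add, mul_smul_comm, smul_smul]
        rw [mul_comm (qb ((q' : K)⁻¹) N i) (((q' : K))⁻¹ ^ i)]
      rw [Finset.sum_congr rfl hterm, Finset.sum_add_distrib]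
      rw [Finset.sum_range_succ'
        (fun i => qb ((q' : K)⁻¹) (N+1) i • ((δ ^ i) x * (⇑σ)^[i] ((δ ^ (N + 1 - i)) y))) (N+1)]
      have hqS : ∀ i, qb ((q' : K)⁻¹) (N+1) (i+1)
          = qb ((q' : K)⁻¹) N i + ((q' : K)⁻¹) ^ (i+1) * qb ((q' : K)⁻¹) N (i+1) := fun i => rfl
      have hq0 : qb ((q' : K)⁻¹) (N+1) 0 = qb ((q' : K)⁻¹) N 0 := rfl
      simp only [hqS, hq0, add_smul, Finset.sum_add_distrib]
      rw [Finset.sum_range_succ'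
        (fun i => (((q' : K)⁻¹) ^ i * qb ((q' : K)⁻¹) N i) •
          ((δ ^ i) x * (⇑σ)^[i] ((δ ^ (N + 1 - i)) y))) N]
      rw [Finset.sum_range_succ
        (fun i => (((q' : K)⁻¹) ^ (i+1) * qb ((q' : K)⁻¹) N (i+1)) •
          ((δ ^ (i+1)) x * (⇑σ)^[i+1] ((δ ^ (N + 1 - (i+1))) y))) N]
      rw [qb_zero_of_lt ((q' : K)⁻¹) N (N+1) (by omega)]
      simp only [pow_zero, one_mul, mul_zero, zero_smul, add_zero]
      abel

include hskew hconj in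
private lemma jos_vanish {p q : ℕ} {x y : A} (hx : (δ ^ (p+1)) x = 0) (hy : (δ ^ (q+1)) y = 0) :
    (δ ^ (p + q + 1)) (x * y) = 0 := by
  rw [jos_leibniz σ δ q' hskew hconj (p + q + 1) x y]
  apply Finset.sum_eq_zero
  intro i hi
  rcases le_or_gt i p with h | h
  · have : (δ ^ (p + q + 1 - i)) y = 0 := jos_zero_mono δ hy (by omega)
    rw [this, jos_iter_zero, mul_zero, smul_zero]
  · have : (δ ^ i) x = 0 := jos_zero_mono δ hx (by omega)
    rw [this, zero_mul, smul_zero]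

include hskew hconj in
private lemma jos_top_single {dx dy : ℕ} {x y : A}
    (hx : (δ ^ (dx+1)) x = 0) (hy : (δ ^ (dy+1)) y = 0) :
    (δ ^ (dx + dy)) (x * y)
      = qb ((q' : K)⁻¹) (dx + dy) dx • ((δ ^ dx) x * (⇑σ)^[dx] ((δ ^ dy) y)) := by
  rw [jos_leibniz σ δ q' hskew hconj (dx + dy) x y]
  have hmem : dx ∈ Finset.range (dx + dy + 1) := by
    simp [Nat.lt_succ_iff]
  rw [Finset.sum_eq_single_of_mem dx hmem ?h]
  · rw [Nat.add_sub_cancel_left]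
  · intro i hi hne
    rcases lt_or_gt_of_ne hne with h | h
    · have : (δ ^ (dx + dy - i)) y = 0 := jos_zero_mono δ hy (by omega)
      rw [this, jos_iter_zero, mul_zero, smul_zero]
    · have : (δ ^ i) x = 0 := jos_zero_mono δ hx (by omega)
      rw [this, zero_mul, smul_zero]

end Aux

/-- Joseph's Ore-set lemma: if `δ` is a locally nilpotent, right regular, right skew
`σ`-derivation of a domain `A` with `σ δ σ⁻¹ = q' δ`, `e ∈ A` is a `σ`-eigenvector
of `δ`-degree `m`, and the powers of `e` satisfy the left and right Ore conditions
in `A`, then the powers of `δ^m(e)` also satisfy the left and right Ore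
conditions in `A`. -/
theorem ore_set_of_skew_derivation_top_term
    {K : Type*} [Field K] {A : Type*} [Ring A] [Algebra K A] [IsDomain A]
    (σ : A ≃ₐ[K] A) (δ : Module.End K A)
    (hskew : ∀ a b : A, δ (a * b) = δ a * σ b + a * δ b)
    (hln : ∀ a : A, ∃ n : ℕ, (δ ^ n) a = 0)
    (q' : Kˣ)
    (hconj : ∀ a : A, σ (δ (σ.symm a)) = (q' : K) • δ a)
    -- `δ` is right regular
    (hreg : ∀ (a b : A) (ta tb : K) (m n : ℕ),
      a ≠ 0 → σ a = ta • a → (δ ^ (m + 1)) a = 0 → (δ ^ m) a ≠ 0 →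
      b ≠ 0 → σ b = tb • b → (δ ^ (n + 1)) b = 0 → (δ ^ n) b ≠ 0 →
      ∀ k : ℕ, n ≤ k → k ≤ m + n →
        ∃ s : ℕ → K, s 0 ≠ 0 ∧
          (δ ^ k) (a * b) =
            ∑ i ∈ Finset.range (m + n - k + 1),
              s i • ((δ ^ (k - n + i)) a * (δ ^ (n - i)) b))
    -- `e` is a `σ`-eigenvector of `δ`-degree `m`
    (e : A) (te : K) (m : ℕ)
    (he : e ≠ 0) (heig : σ e = te • e)
    (hdeg1 : (δ ^ (m + 1)) e = 0) (hdeg2 : (δ ^ m) e ≠ 0)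
    -- the powers of `e` satisfy the right and left Ore conditions in `A`
    (hore_r : ∀ (a : A) (n : ℕ), ∃ (b : A) (k : ℕ), a * e ^ k = e ^ n * b)
    (hore_l : ∀ (a : A) (n : ℕ), ∃ (b : A) (k : ℕ), e ^ k * a = b * e ^ n) :
    (∀ (a : A) (n : ℕ), ∃ (b : A) (k : ℕ),
        a * ((δ ^ m) e) ^ k = ((δ ^ m) e) ^ n * b) ∧
    (∀ (a : A) (n : ℕ), ∃ (b : A) (k : ℕ),
        ((δ ^ m) e) ^ k * a = b * ((δ ^ m) e) ^ n) := by

  classical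
  by_cases hm0 : m = 0
  · subst hm0
    simp only [pow_zero, Module.End.one_apply]
    exact ⟨hore_r, hore_l⟩
  -- main case
  have hq : (q' : K) ≠ 0 := Units.ne_zero q'
  have hte : te ≠ 0 := by
    intro h
    rw [h, zero_smul] at heig
    exact he (σ.injective (heig.trans (map_zero σ).symm))
  set f := (δ ^ m) e with hfdef
  have hf : f ≠ 0 := hdeg2
  have hfc : δ f = 0 := by
    have h1 : (δ ^ (m+1)) e = δ ((δ ^ m) e) := by rw [pow_succ']; rfl
    rw [hfdef, ← h1, hdeg1]
  set μ : K := (q' : K) ^ m * te with hμdef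
  have hμ : μ ≠ 0 := mul_ne_zero (pow_ne_zero _ hq) hte
  have hfe : σ f = μ • f := jos_eig_deriv σ δ q' hconj m heig
  have hfp0 : ∀ p, δ (f ^ p) = 0 := by
    intro p
    induction p with
    | zero => simpa using jos_delta_one σ δ hskew
    | succ p ih => rw [pow_succ, hskew, ih, hfc, zero_mul, mul_zero, add_zero]
  have hfpe : ∀ p, σ (f ^ p) = μ ^ p • f ^ p := by
    intro p
    rw [map_pow, hfe, smul_pow]
  have hSf : ∀ i p, (⇑σ)^[i] (f ^ p) = ((μ ^ p) ^ i) • f ^ p :=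
    fun i p => jos_iter_eigen σ (hfpe p) i
  have hYf : ∀ i p, (⇑σ.symm)^[i] (f ^ p) = ((μ ^ p) ^ i)⁻¹ • f ^ p := by
    intro i p
    have h1 := congrArg ((⇑σ.symm)^[i]) (hSf i p)
    rw [jos_ysym_iter, jos_ysym_smul] at h1
    exact jos_eq_inv_smul (pow_ne_zero _ (pow_ne_zero _ hμ)) h1.symm
  -- the top coefficients of powers of e
  have hcn : ∀ p : ℕ, ∃ c : K, c ≠ 0 ∧ (δ ^ (m*p)) (e^p) = c • f^p ∧ (δ ^ (m*p+1)) (e^p) = 0 := by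
    intro p
    induction p with
    | zero =>
        refine ⟨1, one_ne_zero, by simp, ?_⟩
        simpa using jos_delta_one σ δ hskew
    | succ p ih =>
        obtain ⟨c, hc, h1, h2⟩ := ih
        have hepow : e ^ (p+1) = e * e ^ p := by rw [pow_succ']
        have hvan : (δ ^ (m*(p+1)+1)) (e^(p+1)) = 0 := by
          have hv := jos_vanish σ δ q' hskew hconj hdeg1 h2
          rw [hepow]
          have : m*(p+1)+1 = m + m*p + 1 := by ring
          rw [this]
          exact hv
        have hne : (δ ^ (m*p)) (e^p) ≠ 0 := by
          rw [h1]; exact jos_smul_ne hc (pow_ne_zero _ hf)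
        have hσep : σ (e^p) = (te^p) • e^p := by rw [map_pow, heig, smul_pow]
        obtain ⟨s, hs0, hsum⟩ := hreg e (e^p) te (te^p) m (m*p) he heig hdeg1 hdeg2
          (pow_ne_zero _ he) hσep h2 hne (m + m*p) (by omega) (le_refl _)
        simp only [Nat.sub_self, zero_add, add_zero, Finset.sum_range_one, Nat.add_sub_cancel,
          Nat.sub_zero, Nat.add_sub_cancel_left] at hsum
        refine ⟨s 0 * c, mul_ne_zero hs0 hc, ?_, hvan⟩
        have hM : (δ ^ (m*(p+1))) (e^(p+1)) = s 0 • ((δ ^ m) e * (δ ^ (m*p)) (e^p)) := by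
          rw [hepow, show m*(p+1) = m + m*p by ring, hsum]
        rw [hM, h1, ← hfdef, mul_smul_comm, ← pow_succ' f p, smul_smul]
  -- degree existence
  have hdeg_ex : ∀ x : A, x ≠ 0 → ∃ d, (δ ^ (d+1)) x = 0 ∧ (δ ^ d) x ≠ 0 := by
    intro x hx
    obtain ⟨N, hN⟩ := hln x
    have hex : ∃ t, (δ ^ t) x = 0 := ⟨N, hN⟩
    have h0 : Nat.find hex ≠ 0 := by
      intro h
      have := Nat.find_spec hex
      rw [h] at this
      exact hx (by simpa using this)
    refine ⟨Nat.find hex - 1, ?_, ?_⟩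
    · have hsp := Nat.find_spec hex
      have : Nat.find hex - 1 + 1 = Nat.find hex := by omega
      rw [this]
      exact hsp
    · exact Nat.find_min hex (by omega)
  -- all relevant q-binomials are nonzero
  have hB : ∀ M N : ℕ, qb ((q' : K)⁻¹) (M+N) M ≠ 0 := by
    intro M N
    obtain ⟨cM, hcM, hM1, hM2⟩ := hcn M
    obtain ⟨cN, hcN, hN1, hN2⟩ := hcn N
    set a : A := (δ ^ (m*M - M)) (e^M) with hadef
    set b : A := (δ ^ (m*N - N)) (e^N) with hbdef
    have hMm : M ≤ m*M := Nat.le_mul_of_pos_left M (by omega)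
    have hNm : N ≤ m*N := Nat.le_mul_of_pos_left N (by omega)
    have haM : (δ ^ M) a = (δ ^ (m*M)) (e^M) := jos_dpow_shift δ (by omega) _
    have haM1 : (δ ^ (M+1)) a = 0 := by
      rw [hadef, jos_dpow_shift δ (show M+1 + (m*M - M) = m*M+1 by omega)]
      exact hM2
    have haTop : (δ ^ M) a ≠ 0 := by
      rw [haM, hM1]; exact jos_smul_ne hcM (pow_ne_zero _ hf)
    have ha0 : a ≠ 0 := by
      intro h; apply haTop; rw [h, map_zero]
    have haeig : σ a = ((q' : K) ^ (m*M-M) * te^M) • a :=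
      jos_eig_deriv σ δ q' hconj _ (by rw [map_pow, heig, smul_pow])
    have hbN : (δ ^ N) b = (δ ^ (m*N)) (e^N) := jos_dpow_shift δ (by omega) _
    have hbN1 : (δ ^ (N+1)) b = 0 := by
      rw [hbdef, jos_dpow_shift δ (show N+1 + (m*N - N) = m*N+1 by omega)]
      exact hN2
    have hbTop : (δ ^ N) b ≠ 0 := by
      rw [hbN, hN1]; exact jos_smul_ne hcN (pow_ne_zero _ hf)
    have hb0 : b ≠ 0 := by
      intro h; apply hbTop; rw [h, map_zero]
    have hbeig : σ b = ((q' : K) ^ (m*N-N) * te^N) • b :=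
      jos_eig_deriv σ δ q' hconj _ (by rw [map_pow, heig, smul_pow])
    obtain ⟨s, hs0, hsum⟩ := hreg a b _ _ M N ha0 haeig haM1 haTop hb0 hbeig hbN1 hbTop
      (M+N) (by omega) (le_refl _)
    simp only [Nat.sub_self, zero_add, add_zero, Finset.sum_range_one, Nat.add_sub_cancel,
      Nat.sub_zero] at hsum
    have hsingle := jos_top_single σ δ q' hskew hconj haM1 hbN1
    -- untwist the sigma-iterate on (δ^N) b
    have hbeig2 : σ ((δ ^ N) b) = ((q' : K) ^ N * ((q' : K) ^ (m*N-N) * te^N)) • (δ ^ N) b :=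
      jos_eig_deriv σ δ q' hconj N hbeig
    have hSb : (⇑σ)^[M] ((δ ^ N) b)
        = ((q' : K) ^ N * ((q' : K) ^ (m*N-N) * te^N)) ^ M • (δ ^ N) b :=
      jos_iter_eigen σ hbeig2 M
    rw [hsingle, hSb, mul_smul_comm, smul_smul] at hsum
    have hz : (δ ^ M) a * (δ ^ N) b ≠ 0 := mul_ne_zero haTop hbTop
    have hscal := jos_smul_left_cancel hz hsum
    intro hqb
    rw [hqb, zero_mul] at hscal
    exact hs0 hscal.symm
  -- top-term structure of products
  have hGf : ∀ (x y : A) (dx dy : ℕ), (δ ^ (dx+1)) x = 0 → (δ ^ dx) x ≠ 0 →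
      (δ ^ (dy+1)) y = 0 → (δ ^ dy) y ≠ 0 →
      ((δ ^ (dx + dy)) (x*y) = qb ((q' : K)⁻¹) (dx + dy) dx • ((δ ^ dx) x * (⇑σ)^[dx] ((δ ^ dy) y))
        ∧ (δ ^ (dx + dy)) (x*y) ≠ 0 ∧ (δ ^ (dx + dy + 1)) (x*y) = 0) := by
    intro x y dx dy hx1 hx2 hy1 hy2
    refine ⟨jos_top_single σ δ q' hskew hconj hx1 hy1, ?_, jos_vanish σ δ q' hskew hconj hx1 hy1⟩
    rw [jos_top_single σ δ q' hskew hconj hx1 hy1]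
    exact jos_smul_ne (hB dx dy) (mul_ne_zero hx2 (jos_iter_ne_zero σ dx hy2))
  -- right Ore condition for powers of f
  have main_r : ∀ (n : ℕ) (aa : A), ∃ (b : A) (k : ℕ), aa * f ^ k = f ^ n * b := by
    intro n
    have H : ∀ d : ℕ, ∀ aa : A, (δ ^ (d+1)) aa = 0 →
        ∃ (b : A) (k : ℕ), aa * f ^ k = f ^ n * b := by
      intro d
      induction d using Nat.strong_induction_on with
      | _ d IH =>
        intro aa ha
        by_cases htop : (δ ^ d) aa = 0
        · rcases Nat.eq_zero_or_pos d with hd0 | hdpos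
          · subst hd0
            have haa : aa = 0 := by simpa [pow_zero, Module.End.one_apply] using htop
            exact ⟨0, 0, by simp [haa]⟩
          · obtain ⟨d', rfl⟩ : ∃ d', d = d' + 1 := ⟨d - 1, by omega⟩
            exact IH d' (Nat.lt_succ_self d') aa htop
        · obtain ⟨b0, k, hOre⟩ := hore_r aa (n + d)
          obtain ⟨ck, hck, hekTop, hek1⟩ := hcn k
          obtain ⟨cn1, hc1, henTop, hen1⟩ := hcn (n + d)
          have hb0 : b0 ≠ 0 := by
            rintro rfl
            rw [mul_zero] at hOre
            rcases mul_eq_zero.1 hOre with h | h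
            · exact htop (by rw [h, map_zero])
            · exact pow_ne_zero k he h
          have hekne : (δ ^ (m*k)) (e^k) ≠ 0 := by
            rw [hekTop]; exact jos_smul_ne hck (pow_ne_zero _ hf)
          have henne : (δ ^ (m*(n+d))) (e^(n+d)) ≠ 0 := by
            rw [henTop]; exact jos_smul_ne hc1 (pow_ne_zero _ hf)
          obtain ⟨db, hdb1, hdb2⟩ := hdeg_ex b0 hb0
          obtain ⟨hLeq, hLne, hLvan⟩ := hGf aa (e^k) d (m*k) ha htop hek1 hekne
          obtain ⟨hReq, hRne, hRvan⟩ := hGf (e^(n+d)) b0 (m*(n+d)) db hen1 henne hdb1 hdb2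
          have hdeq : d + m*k = m*(n+d) + db := by
            by_contra hne
            rcases Nat.lt_or_ge (d + m*k) (m*(n+d) + db) with h | h
            · exact hRne (by rw [← hOre]; exact jos_zero_mono δ hLvan (by omega))
            · exact hLne (by rw [hOre]; exact jos_zero_mono δ hRvan (by omega))
          have hTopEq : (δ ^ (d + m*k)) (aa * e^k) = (δ ^ (m*(n+d) + db)) (e^(n+d) * b0) := by
            rw [← hdeq, hOre]
          set B1 : K := qb ((q' : K)⁻¹) (d + m*k) d with hB1def
          set B2 : K := qb ((q' : K)⁻¹) (m*(n+d) + db) (m*(n+d)) with hB2def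
          set w : A := (⇑σ)^[m*(n+d)] ((δ ^ db) b0) with hwdef
          have hSfck : (⇑σ)^[d] ((δ ^ (m*k)) (e^k)) = (ck * (μ^k)^d) • f^k := by
            rw [hekTop, jos_iter_smul, hSf, smul_smul]
          have hLcalc : (δ ^ (d + m*k)) (aa * e^k) = (B1 * (ck * (μ^k)^d)) • ((δ ^ d) aa * f^k) := by
            rw [hLeq, hSfck, mul_smul_comm, smul_smul]
          have hRcalc : (δ ^ (m*(n+d) + db)) (e^(n+d) * b0) = (B2 * cn1) • (f^(n+d) * w) := by
            rw [hReq, henTop, smul_mul_assoc, smul_smul]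
          have hB1 : B1 ≠ 0 := hB d (m*k)
          have hB2 : B2 ≠ 0 := hB (m*(n+d)) db
          have hc3 : B1 * (ck * (μ^k)^d) ≠ 0 :=
            mul_ne_zero hB1 (mul_ne_zero hck (pow_ne_zero _ (pow_ne_zero _ hμ)))
          have hkey : (δ ^ d) aa * f^k
              = ((B1 * (ck * (μ^k)^d))⁻¹ * (B2 * cn1)) • (f^(n+d) * w) := by
            have h5 : (B1 * (ck * (μ^k)^d)) • ((δ ^ d) aa * f^k) = (B2 * cn1) • (f^(n+d) * w) := by
              rw [← hLcalc, hTopEq, hRcalc]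
            have h6 := jos_eq_inv_smul hc3 h5
            rw [h6, smul_smul]
          set γ : K := (B1 * (ck * (μ^k)^d))⁻¹ * (B2 * cn1) with hγdef
          have hγ : γ ≠ 0 := mul_ne_zero (inv_ne_zero hc3) (mul_ne_zero hB2 hc1)
          have hw0 : δ w = 0 := by
            have hd0 : δ ((δ ^ db) b0) = 0 := by
              have h7 : (δ ^ (db+1)) b0 = δ ((δ ^ db) b0) := by rw [pow_succ']; rfl
              rw [← h7]; exact hdb1
            rw [hwdef, jos_iter_delta σ δ q' hconj, hd0, jos_iter_zero, smul_zero]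
          obtain ⟨cd, hcd, hdTop, hd1⟩ := hcn d
          set x0 : A := (⇑σ.symm)^[m*d] w with hx0def
          have hx0S : (⇑σ)^[m*d] x0 = w := by rw [hx0def]; exact jos_iter_ysym σ _ _
          have hx00 : δ x0 = 0 := by rw [hx0def]; exact jos_ysym_delta0 σ δ q' hconj _ hw0
          set bb : A := ((μ^k)^d * γ * cd⁻¹) • (δ ^ (m*d - d)) (e^d * x0) with hbbdef
          have hdd : d ≤ m*d := Nat.le_mul_of_pos_left d (by omega)
          have hbbTop : (δ ^ d) bb = ((μ^k)^d * γ) • (f^d * w) := by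
            rw [hbbdef, map_smul, jos_dpow_shift δ (show d + (m*d - d) = m*d by omega),
              jos_const_right σ δ q' hskew hconj hx00 (m*d) (e^d), hdTop, hx0S,
              smul_mul_assoc, smul_smul]
            congr 1
            field_simp
          have hbb1 : (δ ^ (d+1)) bb = 0 := by
            rw [hbbdef, map_smul, jos_dpow_shift δ (show (d+1) + (m*d - d) = m*d+1 by omega),
              jos_const_right σ δ q' hskew hconj hx00 (m*d+1) (e^d), hd1, zero_mul, smul_zero]
          set r : A := aa * f^k - f^n * bb with hrdef
          have hsplit : aa * f^k = f^n * bb + r := by rw [hrdef]; abel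
          have hArw : (δ ^ d) (aa * f^k) = ((μ^k)^d * γ) • (f^(n+d) * w) := by
            rw [jos_const_right σ δ q' hskew hconj (hfp0 k) d aa, hSf, mul_smul_comm,
              hkey, smul_smul]
          have hBrw : (δ ^ d) (f^n * bb) = ((μ^k)^d * γ) • (f^(n+d) * w) := by
            rw [jos_const_left σ δ hskew (hfp0 n) d bb, hbbTop, mul_smul_comm]
            congr 1
            rw [← mul_assoc, ← pow_add]
          have hrd : (δ ^ d) r = 0 := by rw [hrdef, map_sub, hArw, hBrw, sub_self]
          rcases Nat.eq_zero_or_pos d with hd0 | hdpos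
          · subst hd0
            have hr0 : r = 0 := by simpa [pow_zero, Module.End.one_apply] using hrd
            exact ⟨bb, k, by rw [hsplit, hr0, add_zero]⟩
          · obtain ⟨d', rfl⟩ : ∃ d', d = d' + 1 := ⟨d - 1, by omega⟩
            obtain ⟨b2, M, h2⟩ := IH d' (Nat.lt_succ_self d') r hrd
            refine ⟨bb * f^M + b2, k + M, ?_⟩
            rw [pow_add, ← mul_assoc, hsplit, add_mul, h2, mul_add, mul_assoc]
    intro aa
    obtain ⟨N, hN⟩ := hln aa
    exact H N aa (jos_zero_mono δ hN (by omega))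
  -- left Ore condition for powers of f
  have main_l : ∀ (n : ℕ) (aa : A), ∃ (b : A) (k : ℕ), f ^ k * aa = b * f ^ n := by
    intro n
    have H : ∀ d : ℕ, ∀ aa : A, (δ ^ (d+1)) aa = 0 →
        ∃ (b : A) (k : ℕ), f ^ k * aa = b * f ^ n := by
      intro d
      induction d using Nat.strong_induction_on with
      | _ d IH =>
        intro aa ha
        by_cases htop : (δ ^ d) aa = 0
        · rcases Nat.eq_zero_or_pos d with hd0 | hdpos
          · subst hd0
            have haa : aa = 0 := by simpa [pow_zero, Module.End.one_apply] using htop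
            exact ⟨0, 0, by simp [haa]⟩
          · obtain ⟨d', rfl⟩ : ∃ d', d = d' + 1 := ⟨d - 1, by omega⟩
            exact IH d' (Nat.lt_succ_self d') aa htop
        · obtain ⟨b0, k, hOre⟩ := hore_l aa (n + d)
          obtain ⟨ck, hck, hekTop, hek1⟩ := hcn k
          obtain ⟨cn1, hc1, henTop, hen1⟩ := hcn (n + d)
          have hb0 : b0 ≠ 0 := by
            rintro rfl
            rw [zero_mul] at hOre
            rcases mul_eq_zero.1 hOre with h | h
            · exact pow_ne_zero k he h
            · exact htop (by rw [h, map_zero])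
          have hekne : (δ ^ (m*k)) (e^k) ≠ 0 := by
            rw [hekTop]; exact jos_smul_ne hck (pow_ne_zero _ hf)
          have henne : (δ ^ (m*(n+d))) (e^(n+d)) ≠ 0 := by
            rw [henTop]; exact jos_smul_ne hc1 (pow_ne_zero _ hf)
          obtain ⟨db, hdb1, hdb2⟩ := hdeg_ex b0 hb0
          obtain ⟨hLeq, hLne, hLvan⟩ := hGf (e^k) aa (m*k) d hek1 hekne ha htop
          obtain ⟨hReq, hRne, hRvan⟩ := hGf b0 (e^(n+d)) db (m*(n+d)) hdb1 hdb2 hen1 henne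
          have hdeq : m*k + d = db + m*(n+d) := by
            by_contra hne
            rcases Nat.lt_or_ge (m*k + d) (db + m*(n+d)) with h | h
            · exact hRne (by rw [← hOre]; exact jos_zero_mono δ hLvan (by omega))
            · exact hLne (by rw [hOre]; exact jos_zero_mono δ hRvan (by omega))
          have hTopEq : (δ ^ (m*k + d)) (e^k * aa) = (δ ^ (db + m*(n+d))) (b0 * e^(n+d)) := by
            rw [← hdeq, hOre]
          set B1 : K := qb ((q' : K)⁻¹) (m*k + d) (m*k) with hB1def
          set B2 : K := qb ((q' : K)⁻¹) (db + m*(n+d)) db with hB2def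
          have hLcalc : (δ ^ (m*k + d)) (e^k * aa)
              = (B1 * ck) • (f^k * (⇑σ)^[m*k] ((δ ^ d) aa)) := by
            rw [hLeq, hekTop, smul_mul_assoc, smul_smul]
          have hSfcn : (⇑σ)^[db] ((δ ^ (m*(n+d))) (e^(n+d))) = (cn1 * (μ^(n+d))^db) • f^(n+d) := by
            rw [henTop, jos_iter_smul, hSf, smul_smul]
          have hRcalc : (δ ^ (db + m*(n+d))) (b0 * e^(n+d))
              = (B2 * (cn1 * (μ^(n+d))^db)) • ((δ ^ db) b0 * f^(n+d)) := by
            rw [hReq, hSfcn, mul_smul_comm, smul_smul]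
          have h5 : (B1 * ck) • (f^k * (⇑σ)^[m*k] ((δ ^ d) aa))
              = (B2 * (cn1 * (μ^(n+d))^db)) • ((δ ^ db) b0 * f^(n+d)) := by
            rw [← hLcalc, hTopEq, hRcalc]
          have h6 := congrArg ((⇑σ.symm)^[m*k]) h5
          rw [jos_ysym_smul, jos_ysym_smul, jos_ysym_mul, jos_ysym_mul,
            jos_ysym_iter σ (m*k) ((δ ^ d) aa), hYf (m*k) k, hYf (m*k) (n+d),
            smul_mul_assoc, mul_smul_comm, smul_smul, smul_smul] at h6
          set u : A := (⇑σ.symm)^[m*k] ((δ ^ db) b0) with hudef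
          -- h6 : (B1 * ck * ((μ^k)^(m*k))⁻¹) • (f^k * (δ^d) aa)
          --        = (B2 * (cn1 * (μ^(n+d))^db) * ((μ^(n+d))^(m*k))⁻¹) • (u * f^(n+d))
          have hB1ne : B1 ≠ 0 := hB (m*k) d
          have hB2ne : B2 ≠ 0 := hB db (m*(n+d))
          have hc1' : (B1 * ck) * ((μ^k)^(m*k))⁻¹ ≠ 0 :=
            mul_ne_zero (mul_ne_zero hB1ne hck)
              (inv_ne_zero (pow_ne_zero _ (pow_ne_zero _ hμ)))
          have hkey : f^k * (δ ^ d) aa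
              = (((B1 * ck) * ((μ^k)^(m*k))⁻¹)⁻¹
                  * ((B2 * (cn1 * (μ^(n+d))^db)) * ((μ^(n+d))^(m*k))⁻¹)) • (u * f^(n+d)) := by
            have h7 := jos_eq_inv_smul hc1' h6
            rw [h7, smul_smul]
          set c2 : K := ((B1 * ck) * ((μ^k)^(m*k))⁻¹)⁻¹
              * ((B2 * (cn1 * (μ^(n+d))^db)) * ((μ^(n+d))^(m*k))⁻¹) with hc2def
          have hc2ne : c2 ≠ 0 := by
            apply mul_ne_zero (inv_ne_zero hc1')
            exact mul_ne_zero
              (mul_ne_zero hB2ne (mul_ne_zero hc1 (pow_ne_zero _ (pow_ne_zero _ hμ))))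
              (inv_ne_zero (pow_ne_zero _ (pow_ne_zero _ hμ)))
          have hu0 : δ u = 0 := by
            have hd0 : δ ((δ ^ db) b0) = 0 := by
              have h7 : (δ ^ (db+1)) b0 = δ ((δ ^ db) b0) := by rw [pow_succ']; rfl
              rw [← h7]; exact hdb1
            rw [hudef]; exact jos_ysym_delta0 σ δ q' hconj _ hd0
          obtain ⟨cd, hcd, hdTop, hd1⟩ := hcn d
          have hdd : d ≤ m*d := Nat.le_mul_of_pos_left d (by omega)
          set bb : A := (((μ^n)^d)⁻¹ * c2 * cd⁻¹) • (δ ^ (m*d - d)) (u * e^d) with hbbdef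
          have hbbTop : (δ ^ d) bb = (((μ^n)^d)⁻¹ * c2) • (u * f^d) := by
            rw [hbbdef, map_smul, jos_dpow_shift δ (show d + (m*d - d) = m*d by omega),
              jos_const_left σ δ hskew hu0 (m*d) (e^d), hdTop, mul_smul_comm, smul_smul]
            congr 1
            field_simp
          have hbb1 : (δ ^ (d+1)) bb = 0 := by
            rw [hbbdef, map_smul, jos_dpow_shift δ (show (d+1) + (m*d - d) = m*d+1 by omega),
              jos_const_left σ δ hskew hu0 (m*d+1) (e^d), hd1, mul_zero, smul_zero]
          set r : A := f^k * aa - bb * f^n with hrdef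
          have hsplit : f^k * aa = bb * f^n + r := by rw [hrdef]; abel
          have hArw : (δ ^ d) (f^k * aa) = c2 • (u * f^(n+d)) := by
            rw [jos_const_left σ δ hskew (hfp0 k) d aa, hkey]
          have hBrw : (δ ^ d) (bb * f^n) = c2 • (u * f^(n+d)) := by
            rw [jos_const_right σ δ q' hskew hconj (hfp0 n) d bb, hSf, hbbTop,
              mul_smul_comm, smul_mul_assoc, smul_smul]
            have hsc : (μ^n)^d * (((μ^n)^d)⁻¹ * c2) = c2 := by
              field_simp
            rw [hsc]
            congr 1
            rw [mul_assoc, ← pow_add, Nat.add_comm d n]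
          have hrd : (δ ^ d) r = 0 := by rw [hrdef, map_sub, hArw, hBrw, sub_self]
          rcases Nat.eq_zero_or_pos d with hd0 | hdpos
          · subst hd0
            have hr0 : r = 0 := by simpa [pow_zero, Module.End.one_apply] using hrd
            exact ⟨bb, k, by rw [hsplit, hr0, add_zero]⟩
          · obtain ⟨d', rfl⟩ : ∃ d', d = d' + 1 := ⟨d - 1, by omega⟩
            obtain ⟨b2, M, h2⟩ := IH d' (Nat.lt_succ_self d') r hrd
            refine ⟨f^M * bb + b2, M + k, ?_⟩
            rw [pow_add, mul_assoc, hsplit, mul_add, h2, add_mul, ← mul_assoc]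
    intro aa
    obtain ⟨N, hN⟩ := hln aa
    exact H N aa (jos_zero_mono δ hN (by omega))
  exact ⟨fun a n => main_r n a, fun a n => main_l n a⟩
end

section
/- Let V be a finite-dimensional vector space over ℚ equipped with a nondegenerate symmetric bilinear form ⟨·,·⟩, let P ⊆ V be a finitely generated subgroup whose ℚ-span is all of V, and let L ⊆ P be a subgroup. Then there exists a positive integer n such that every group homomorphism φ : L → ℤ has the form φ(γ) = ⟨λ, γ⟩ for all γ ∈ L, for some λ ∈ V with n·λ ∈ P. -/
/-- Every vector in the `ℚ`-span of `P` has a positive integer multiple in `P`. -/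
theorem exists_nat_smul_mem_of_span {V : Type*} [AddCommGroup V] [Module ℚ V]
    (P : Submodule ℤ V) (hfull : Submodule.span ℚ (P : Set V) = ⊤) (v : V) :
    ∃ m : ℕ, 0 < m ∧ (m : ℤ) • v ∈ P := by
  have hv : v ∈ Submodule.span ℚ (P : Set V) := by rw [hfull]; trivial
  have hcast : ∀ (n : ℤ) (y : V), n • y = (n : ℚ) • y :=
    fun n y => (Int.cast_smul_eq_zsmul ℚ n y).symm
  induction hv using Submodule.span_induction with
  | mem x hx => exact ⟨1, one_pos, by simpa using hx⟩
  | zero => exact ⟨1, one_pos, by simp⟩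
  | add x y _ _ hx hy =>
      obtain ⟨m1, hm1, h1⟩ := hx
      obtain ⟨m2, hm2, h2⟩ := hy
      refine ⟨m1 * m2, Nat.mul_pos hm1 hm2, ?_⟩
      rw [smul_add]
      refine P.add_mem ?_ ?_
      · have : ((m1 * m2 : ℕ) : ℤ) • x = (m2 : ℤ) • ((m1 : ℤ) • x) := by
          push_cast [mul_comm (m1:ℤ) (m2:ℤ), mul_smul]; rfl
        rw [this]; exact P.smul_mem _ h1
      · have : ((m1 * m2 : ℕ) : ℤ) • y = (m1 : ℤ) • ((m2 : ℤ) • y) := by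
          push_cast [mul_smul]; rfl
        rw [this]; exact P.smul_mem _ h2
  | smul q x _ hx =>
      obtain ⟨m, hm, h⟩ := hx
      refine ⟨q.den * m, Nat.mul_pos q.pos hm, ?_⟩
      have key : ((q.den * m : ℕ) : ℤ) • (q • x) = q.num • ((m : ℤ) • x) := by
        simp only [hcast, smul_smul]
        congr 1
        push_cast
        rw [show ((q.den : ℚ)) * (m : ℚ) * q = (q * q.den) * m by ring, Rat.mul_den_eq_num]
      rw [key]; exact P.smul_mem _ h

/-- A hom `L →+ ℤ` in terms of a basis expansion. -/
theorem hom_apply_eq_sum {V : Type*} [AddCommGroup V] [Module ℚ V]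
    (L : Submodule ℤ V) {ι : Type*} [Fintype ι] (b : Module.Basis ι ℤ L)
    (ψ : L →+ ℤ) (γ : L) : ψ γ = ∑ i, b.repr γ i * ψ (b i) := by
  conv_lhs => rw [← b.sum_repr γ]
  rw [map_sum]
  simp [smul_eq_mul]

/-- Single functional represented by the form. -/
theorem exists_lam_single {V : Type*} [AddCommGroup V] [Module ℚ V] [FiniteDimensional ℚ V]
    (B : V →ₗ[ℚ] V →ₗ[ℚ] ℚ)
    (hnd : ∀ u : V, (∀ v : V, B u v = 0) → u = 0)
    (L : Submodule ℤ V) {ι : Type*} [Fintype ι] (b : Module.Basis ι ℤ L)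
    (ψ : L →+ ℤ) :
    ∃ lam : V, ∀ γ : L, (ψ γ : ℚ) = B lam (γ : V) := by
  classical
  set v : ι → V := fun i => (b i : V) with hv
  have hℤ : LinearIndependent ℤ v :=
    b.linearIndependent.map' L.subtype (Submodule.ker_subtype L)
  have hℚ : LinearIndependent ℚ v := (LinearIndependent.iff_fractionRing ℤ ℚ).mp hℤ
  set U := Submodule.span ℚ (Set.range v) with hU
  let bU : Module.Basis ι ℚ U := Module.Basis.span hℚ
  let fU : U →ₗ[ℚ] ℚ := bU.constr ℚ (fun i => (ψ (b i) : ℚ))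
  obtain ⟨f, hf⟩ := LinearMap.exists_extend fU
  refine ⟨(LinearMap.BilinForm.toDual B (LinearMap.BilinForm.Nondegenerate.ofSeparatingLeft hnd)).symm f, ?_⟩
  have hBlam : ∀ w : V, B ((LinearMap.BilinForm.toDual B (LinearMap.BilinForm.Nondegenerate.ofSeparatingLeft hnd)).symm f) w = f w :=
    fun w => LinearMap.BilinForm.apply_toDual_symm_apply (B := B) (hB := (LinearMap.BilinForm.Nondegenerate.ofSeparatingLeft hnd)) f w
  have hfv : ∀ i, f (v i) = (ψ (b i) : ℚ) := by
    intro i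
    have h1 : (U.subtype (bU i)) = v i := congrArg Subtype.val (Module.Basis.span_apply hℚ i)
    have h2 : f (U.subtype (bU i)) = fU (bU i) := by rw [← hf]; rfl
    rw [← h1, h2]
    exact bU.constr_basis ℚ _ i
  intro γ
  rw [hBlam]
  have hγ : (γ : V) = ∑ i, (b.repr γ i) • (v i) := by
    conv_lhs => rw [← b.sum_repr γ]
    push_cast
    rfl
  rw [hγ, map_sum, hom_apply_eq_sum L b ψ γ]
  push_cast
  refine Finset.sum_congr rfl fun i _ => ?_
  rw [map_zsmul, hfv, zsmul_eq_mul]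

/-- Let `V` be a finite-dimensional `ℚ`-vector space with a nondegenerate symmetric
bilinear form, `P` a full-rank lattice in `V` and `L ⊆ P` a subgroup. Then there
is a positive integer `n` such that every homomorphism `φ : L → ℤ` is of the form
`φ(γ) = ⟨λ, γ⟩` for some `λ ∈ (1/n)P`. -/
theorem hom_of_sublattice_represented_by_form
    {V : Type*} [AddCommGroup V] [Module ℚ V] [FiniteDimensional ℚ V]
    (B : V →ₗ[ℚ] V →ₗ[ℚ] ℚ)
    (hsymm : ∀ u v : V, B u v = B v u)
    (hnd : ∀ u : V, (∀ v : V, B u v = 0) → u = 0)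
    (P L : Submodule ℤ V) (hP : P.FG)
    (hfull : Submodule.span ℚ (P : Set V) = ⊤)
    (hLP : L ≤ P) :
    ∃ n : ℕ, 0 < n ∧ ∀ φ : L →+ ℤ, ∃ lam : V,
      (n : ℤ) • lam ∈ P ∧ ∀ γ : L, (φ γ : ℚ) = B lam (γ : V) := by
  classical
  -- `L` is a finitely generated, torsion-free, hence free `ℤ`-module.
  have hLfg : L.FG := by
    have : IsNoetherian ℤ P := isNoetherian_of_fg_of_noetherian P hP
    have h1 : (L.comap P.subtype).FG := IsNoetherian.noetherian _
    have h2 : (L.comap P.subtype).map P.subtype = L := by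
      rw [Submodule.map_comap_subtype]
      exact inf_eq_right.mpr hLP
    rw [← h2]; exact h1.map _
  have : Module.Finite ℤ L := Module.Finite.iff_fg.mpr hLfg
  have : NoZeroSMulDivisors ℤ L := by
    constructor
    intro c x h
    rcases eq_or_ne c 0 with rfl | hc
    · exact Or.inl rfl
    · right
      have : (c : ℚ) • (x : V) = 0 := by
        rw [Int.cast_smul_eq_zsmul]
        simpa using congrArg (Subtype.val) h
      have hx : (x : V) = 0 := by
        rcases smul_eq_zero.mp this with h' | h'
        · exact absurd (by exact_mod_cast h') hc
        · exact h'
      exact Subtype.ext hx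
  have : Module.Free ℤ L := Module.free_of_finite_type_torsion_free'
  let ι := Module.Free.ChooseBasisIndex ℤ L
  let b : Module.Basis ι ℤ L := Module.Free.chooseBasis ℤ L
  -- represent each coordinate functional
  have hsingle : ∀ i : ι, ∃ lam : V, (∃ m : ℕ, 0 < m ∧ (m : ℤ) • lam ∈ P) ∧
      ∀ γ : L, ((b.coord i γ : ℤ) : ℚ) = B lam (γ : V) := by
    intro i
    obtain ⟨lam, hlam⟩ := exists_lam_single B hnd L b (b.coord i).toAddMonoidHom
    exact ⟨lam, exists_nat_smul_mem_of_span P hfull lam, hlam⟩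
  choose lam hden hrep using hsingle
  choose m hmpos hmem using hden
  refine ⟨∏ i, m i, Finset.prod_pos fun i _ => hmpos i, ?_⟩
  intro φ
  refine ⟨∑ i, φ (b i) • lam i, ?_, ?_⟩
  · rw [Finset.smul_sum]
    refine Submodule.sum_mem P fun i _ => ?_
    obtain ⟨k, hk⟩ : (m i : ℤ) ∣ (∏ j, m j : ℕ) := by
      exact_mod_cast Int.natCast_dvd_natCast.mpr (Finset.dvd_prod_of_mem m (Finset.mem_univ i))
    rw [smul_comm, hk, mul_comm, mul_smul]
    exact P.smul_mem _ (P.smul_mem _ (hmem i))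
  · intro γ
    rw [hom_apply_eq_sum L b φ γ]
    push_cast
    rw [map_sum, LinearMap.coe_sum, Finset.sum_apply]
    refine Finset.sum_congr rfl fun i _ => ?_
    rw [map_zsmul, LinearMap.smul_apply, ← hrep i γ, zsmul_eq_mul]
    have : ((b.coord i) γ : ℚ) = ((b.repr γ) i : ℚ) := by norm_cast
    rw [this]
    push_cast
    ring
end
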